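/- Let E be a real inner product space and f : E → ℝ a convex differentiable function whose gradient is affine Lipschitz with constants L ≥ 0 and c ≥ 0, i.e., ‖∇f(w₂) − ∇f(w₁)‖ ≤ L‖w₂ − w₁‖ + c for all w₁, w₂ ∈ E. Then for all w, w⋆ ∈ E: ‖∇f(w)‖² ≤ 4(L+1)·(f(w) − f(w⋆) − ⟪∇f(w⋆), w − w⋆⟫) + 2(L+1)·c² + 2‖∇f(w⋆)‖². -/

import Mathlib

open RealInnerProductSpace

set_option maxHeartbeats 2000000 in
/-- Deterministic core of Lemma 4: for a convex differentiable function whose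
gradient is affine Lipschitz with constants `(L, c)`, the squared gradient norm is
bounded by the Bregman-type gap at a reference point plus `2(L+1)c²` plus twice
the squared gradient norm at the reference point. -/
theorem gradient_norm_sq_le_bregman_gap
    {E : Type*} [NormedAddCommGroup E] [InnerProductSpace ℝ E] [CompleteSpace E]
    (f : E → ℝ) (g : E → E) (L c : ℝ) (hL : 0 ≤ L) (hc : 0 ≤ c)
    (hconv : ConvexOn ℝ Set.univ f)
    (hgrad : ∀ w : E, HasGradientAt f (g w) w)
    (haff : ∀ w₁ w₂ : E, ‖g w₂ - g w₁‖ ≤ L * ‖w₂ - w₁‖ + c) :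
    ∀ w wstar : E,
      ‖g w‖ ^ 2 ≤
        4 * (L + 1) * (f w - f wstar - ⟪g wstar, w - wstar⟫) +
          2 * (L + 1) * c ^ 2 + 2 * ‖g wstar‖ ^ 2 := by
  -- derivative along a line
  have hline : ∀ (x v : E) (s : ℝ),
      HasDerivAt (fun t : ℝ => f (x + t • v)) ⟪g (x + s • v), v⟫ s := by
    intro x v s
    have h1 : HasDerivAt (fun t : ℝ => x + t • v) v s := by
      simpa using ((hasDerivAt_id s).smul_const v).const_add x
    have h2 := ((hgrad (x + s • v)).hasFDerivAt).comp_hasDerivAt s h1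
    have h3 : HasDerivAt (fun t : ℝ => f (x + t • v)) ⟪g (x + s • v), v⟫ s := by
      simp only [InnerProductSpace.toDual_apply_apply] at h2
      exact h2
    exact h3
  -- gradient inequality from convexity
  have key : ∀ x y : E, f x + ⟪g x, y - x⟫ ≤ f y := by
    intro x y
    have hψ : ConvexOn ℝ Set.univ (fun t : ℝ => f (x + t • (y - x))) := by
      have := hconv.comp_affineMap
        (AffineMap.lineMap x y : ℝ →ᵃ[ℝ] E)
      have heq : (fun t : ℝ => f (x + t • (y - x)))
          = f ∘ (AffineMap.lineMap x y : ℝ →ᵃ[ℝ] E) := by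
        funext t
        simp [AffineMap.lineMap_apply, add_comm]
      rw [heq]
      simpa using this
    have hd : HasDerivAt (fun t : ℝ => f (x + t • (y - x))) ⟪g x, y - x⟫ 0 := by
      simpa using hline x (y - x) 0
    have hs := hψ.le_slope_of_hasDerivAt (Set.mem_univ (0 : ℝ)) (Set.mem_univ 1)
      one_pos hd
    rw [slope_def_field] at hs
    have hx1 : x + (1:ℝ) • (y - x) = y := by simp
    have hx0 : x + (0:ℝ) • (y - x) = x := by simp
    rw [hx1, hx0] at hs
    norm_num at hs
    linarith [hs]
  -- descent lemma
  have descent : ∀ x v : E, f (x + v) ≤ f x + ⟪g x, v⟫ + L / 2 * ‖v‖ ^ 2 + c * ‖v‖ := by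
    intro x v
    set χ : ℝ → ℝ := fun t =>
      f (x + t • v) - t * ⟪g x, v⟫ - L / 2 * t ^ 2 * ‖v‖ ^ 2 - c * t * ‖v‖ with hχ
    have hχd : ∀ t : ℝ, HasDerivAt χ
        (⟪g (x + t • v), v⟫ - ⟪g x, v⟫ - L * t * ‖v‖ ^ 2 - c * ‖v‖) t := by
      intro t
      have h1 := hline x v t
      have h2 : HasDerivAt (fun t : ℝ => t * ⟪g x, v⟫) ⟪g x, v⟫ t := by
        simpa using (hasDerivAt_id t).mul_const ⟪g x, v⟫
      have h3 : HasDerivAt (fun t : ℝ => L / 2 * t ^ 2 * ‖v‖ ^ 2)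
          (L * t * ‖v‖ ^ 2) t := by
        have := ((hasDerivAt_pow 2 t).const_mul (L / 2)).mul_const (‖v‖ ^ 2)
        exact this.congr_deriv (by ring)
      have h4 : HasDerivAt (fun t : ℝ => c * t * ‖v‖) (c * ‖v‖) t := by
        have := ((hasDerivAt_id t).const_mul c).mul_const ‖v‖
        simpa using this
      exact ((h1.sub h2).sub h3).sub h4
    have hanti : AntitoneOn χ (Set.Icc (0:ℝ) 1) := by
      apply antitoneOn_of_deriv_nonpos (convex_Icc 0 1)
      · exact fun t _ => ((hχd t).continuousAt).continuousWithinAt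
      · exact fun t _ => ((hχd t).differentiableAt).differentiableWithinAt
      · intro t ht
        rw [interior_Icc] at ht
        rw [(hχd t).deriv]
        have hb : ⟪g (x + t • v) - g x, v⟫ ≤ (L * (t * ‖v‖) + c) * ‖v‖ := by
          calc ⟪g (x + t • v) - g x, v⟫ ≤ ‖g (x + t • v) - g x‖ * ‖v‖ :=
                real_inner_le_norm _ _
            _ ≤ (L * ‖(x + t • v) - x‖ + c) * ‖v‖ := by
                apply mul_le_mul_of_nonneg_right (haff x (x + t • v)) (norm_nonneg v)
            _ = (L * (t * ‖v‖) + c) * ‖v‖ := by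
                rw [add_sub_cancel_left, norm_smul, Real.norm_eq_abs,
                  abs_of_pos ht.1]
        rw [inner_sub_left] at hb
        nlinarith [hb]
    have h01 := hanti (Set.left_mem_Icc.2 zero_le_one) (Set.right_mem_Icc.2 zero_le_one)
      zero_le_one
    simp only [hχ, zero_smul, add_zero, one_smul, zero_pow, mul_zero, zero_mul, mul_one,
      sub_zero, one_pow, mul_one] at h01
    linarith [h01]
  intro w wstar
  set G : E := g w - g wstar with hG
  set N : ℝ := ‖G‖ with hN
  set S : ℝ := ‖g wstar‖ with hS
  set gap : ℝ := f w - f wstar - ⟪g wstar, w - wstar⟫ with hgap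
  clear_value G N S gap
  have hgap0 : 0 ≤ gap := by
    have := key wstar w
    simp only [hgap]
    linarith [this]
  have hNnn : 0 ≤ N := by rw [hN]; exact norm_nonneg G
  have hSnn : 0 ≤ S := by rw [hS]; exact norm_nonneg _
  have hPle : ‖g w‖ ≤ N + S := by
    calc ‖g w‖ = ‖G + g wstar‖ := by rw [hG, sub_add_cancel]
      _ ≤ N + S := by rw [hN, hS]; exact norm_add_le _ _
  have hP2 : ‖g w‖ ^ 2 ≤ 2 * N ^ 2 + 2 * S ^ 2 := by
    nlinarith [sq_nonneg (N - S), norm_nonneg (g w)]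
  -- key quadratic inequality
  have star : ∀ t : ℝ, 0 ≤ t →
      0 ≤ gap - t * N ^ 2 + L / 2 * t ^ 2 * N ^ 2 + c * t * N := by
    intro t ht
    have hd := descent w ((-t) • G)
    have hk := key wstar (w + (-t) • G)
    have e1 : ⟪g w, (-t) • G⟫ = -t * ⟪g w, G⟫ := real_inner_smul_right _ _ _
    have e2 : ‖(-t) • G‖ = t * N := by
      rw [norm_smul, Real.norm_eq_abs, abs_neg, abs_of_nonneg ht, hN]
    have e3 : ⟪g wstar, (w + (-t) • G) - wstar⟫
        = ⟪g wstar, w - wstar⟫ + (-t) * ⟪g wstar, G⟫ := by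
      rw [show (w + (-t) • G) - wstar = (w - wstar) + (-t) • G by abel,
        inner_add_right, real_inner_smul_right]
    have e4 : ⟪g w, G⟫ - ⟪g wstar, G⟫ = N ^ 2 := by
      rw [← inner_sub_left, ← hG, hN, ← real_inner_self_eq_norm_sq]
    rw [e1, e2] at hd
    rw [e3] at hk
    nlinarith [hd, hk, e4]
  rcases eq_or_lt_of_le hL with hL0 | hLpos
  · -- L = 0 : gradient difference is bounded by c
    subst hL0
    have hNc : N ≤ c := by
      rw [hN, hG]
      simpa using haff wstar w
    nlinarith [hP2, hgap0, hNc, hc, hNnn, hSnn, sq_nonneg S]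
  · rcases le_or_gt N c with hNc | hcN
    · nlinarith [hP2, hgap0, hNc, hc, hNnn, hSnn]
    · have hNpos : 0 < N := lt_of_le_of_lt hc hcN
      set t : ℝ := (N - c) / (L * N) with htdef
      clear_value t
      have htpos : 0 ≤ t := by
        rw [htdef]
        exact div_nonneg (by linarith) (le_of_lt (mul_pos hLpos hNpos))
      have hstar := star t htpos
      have hA : (N - c) ^ 2 ≤ 2 * L * gap := by
        have e : gap - t * N ^ 2 + L / 2 * t ^ 2 * N ^ 2 + c * t * N
            = gap - (N - c) ^ 2 / (2 * L) := by
          rw [htdef]; field_simp; ring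
        have h5 : 0 ≤ gap - (N - c) ^ 2 / (2 * L) := e ▸ hstar
        have h2L : (0:ℝ) < 2 * L := by linarith
        have h6 := (div_le_iff₀ h2L).mp (by linarith : (N - c) ^ 2 / (2 * L) ≤ gap)
        linarith
      have hA' := mul_le_mul_of_nonneg_left hA (by linarith : (0:ℝ) ≤ L + 1)
      clear star key descent hline haff hgrad hconv hstar htdef hgap hN hS hG
      have hN2 : L * N ^ 2 ≤ (L + 1) * (N - c) ^ 2 + (L + L ^ 2) * c ^ 2 := by
        linarith [sq_nonneg (N - c - L * c)]
      have hcomb : L * N ^ 2 ≤ 2 * L * (L + 1) * gap + (L + L ^ 2) * c ^ 2 := by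
        nlinarith [hA', hN2]
      have hNsq : N ^ 2 ≤ 2 * (L + 1) * gap + (1 + L) * c ^ 2 := by
        have h7 : L * N ^ 2 ≤ L * (2 * (L + 1) * gap + (1 + L) * c ^ 2) := by
          nlinarith [hcomb]
        exact (mul_le_mul_iff_right₀ hLpos).mp h7
      nlinarith [hP2, hNsq, hgap0, hLpos.le]
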